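/- arXiv:2507.13500 — 2 statements merged into one kernel-verified Lean document; each statement's English description precedes it below -/
import Mathlib

section
/- Fix integers n ≥ 1, f ≥ 1, and a prime p with p > n. Suppose for 0 ≤ i ≤ f−1 and 1 ≤ j ≤ n we have integers λ_{i,j} with |λ_{i,j}| ≤ n − 1, such that for each i the sum Σ_j λ_{i,j} = 0, and set λ* := Σ_{i,j} λ_{i,j} p^{i+(j−1)f}. If q := p^f and (q^n − 1) divides λ*, then all λ_{i,j} = 0. -/
private lemma digits_zero (p : ℤ) (hp : 2 ≤ p) :
    ∀ m (g : ℕ → ℤ), (∀ k, |g k| < p) → (∑ k ∈ Finset.range m, g k * p ^ k = 0) →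
    ∀ k < m, g k = 0 := by
  intro m
  induction m with
  | zero => intro g _ _ k hk; omega
  | succ m ih =>
    intro g hg hsum
    rw [Finset.sum_range_succ'] at hsum
    have hshift : ∑ k ∈ Finset.range m, g (k + 1) * p ^ (k + 1)
        = p * ∑ k ∈ Finset.range m, g (k + 1) * p ^ k := by
      rw [Finset.mul_sum]
      exact Finset.sum_congr rfl fun k _ => by ring
    rw [hshift] at hsum
    have hg0 : g 0 = 0 := by
      refine Int.eq_zero_of_abs_lt_dvd ⟨-(∑ k ∈ Finset.range m, g (k + 1) * p ^ k), ?_⟩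
        (hg 0)
      simp only [pow_zero, mul_one] at hsum
      linarith
    have hrest : ∑ k ∈ Finset.range m, g (k + 1) * p ^ k = 0 := by
      have hpne : p ≠ 0 := by omega
      have : p * ∑ k ∈ Finset.range m, g (k + 1) * p ^ k = 0 := by
        simp only [pow_zero, mul_one] at hsum; linarith [hg0]
      exact (mul_eq_zero.mp this).resolve_left hpne
    have ih' := ih (fun k => g (k + 1)) (fun k => hg (k + 1)) hrest
    intro k hk
    cases k with
    | zero => exact hg0
    | succ k => exact ih' k (by omega)

/-- Integers `λ_{i,j}` with `|λ_{i,j}| ≤ n - 1 < p - 1`, each row summing to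
zero, arranged into `λ* = Σ_{i,j} λ_{i,j} p^{i + j·f}` (with `0 ≤ i < f`, `0 ≤ j < n`,
matching the paper's `1 ≤ j ≤ n` via `j ↦ j - 1`).  If `q^n - 1 = p^{nf} - 1` divides
`λ*`, then all `λ_{i,j}` vanish. -/
theorem eq_zero_of_qn_sub_one_dvd
    (n f p : ℕ) (hn : 1 ≤ n) (hf : 1 ≤ f) (hp : p.Prime) (hpn : n < p)
    (lam : Fin f → Fin n → ℤ)
    (hbound : ∀ i j, |lam i j| ≤ (n : ℤ) - 1)
    (hrow : ∀ i, ∑ j, lam i j = 0)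
    (hdvd : ((p : ℤ) ^ (n * f) - 1) ∣
      ∑ i : Fin f, ∑ j : Fin n, lam i j * (p : ℤ) ^ ((i : ℕ) + (j : ℕ) * f)) :
    ∀ i j, lam i j = 0 := by
  have hf0 : 0 < f := hf
  have hp2 : 2 ≤ (p : ℤ) := by exact_mod_cast hp.two_le
  -- the digit function
  set g : ℕ → ℤ := fun k =>
    if h : k < n * f then
      lam ⟨k % f, Nat.mod_lt _ hf0⟩ ⟨k / f, (Nat.div_lt_iff_lt_mul hf0).mpr h⟩
    else 0 with hg_def
  have hg_b2 : ∀ k, |g k| ≤ (p : ℤ) - 2 := by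
    intro k
    simp only [hg_def]
    split
    · exact le_trans (hbound _ _) (by push_cast; omega)
    · simpa using by omega
  have hg_bound : ∀ k, |g k| < (p : ℤ) := fun k => lt_of_le_of_lt (hg_b2 k) (by omega)
  have hkey : ∀ (i : Fin f) (j : Fin n),
      (i : ℕ) + (j : ℕ) * f < n * f ∧ g ((i : ℕ) + (j : ℕ) * f) = lam i j := by
    intro i j
    have hi := i.isLt
    have hj := j.isLt
    have hlt : (i : ℕ) + (j : ℕ) * f < n * f := by
      calc (i : ℕ) + (j : ℕ) * f < f + (j : ℕ) * f := by omega
        _ ≤ n * f := by nlinarith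
    refine ⟨hlt, ?_⟩
    have h1 : ((i : ℕ) + (j : ℕ) * f) % f = i := by
      rw [Nat.add_mul_mod_self_right, Nat.mod_eq_of_lt hi]
    have h2 : ((i : ℕ) + (j : ℕ) * f) / f = j := by
      rw [Nat.add_mul_div_right _ _ hf0, Nat.div_eq_of_lt hi, zero_add]
    simp only [hg_def, dif_pos hlt, h1, h2, Fin.eta]
  -- rewrite the sum
  have hsum_eq : (∑ i : Fin f, ∑ j : Fin n, lam i j * (p : ℤ) ^ ((i : ℕ) + (j : ℕ) * f))
      = ∑ k ∈ Finset.range (n * f), g k * (p : ℤ) ^ k := by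
    rw [← Finset.sum_product']
    refine Finset.sum_nbij' (fun x => (x.1 : ℕ) + (x.2 : ℕ) * f)
      (fun k => if h : k < n * f then
        (⟨k % f, Nat.mod_lt _ hf0⟩, ⟨k / f, (Nat.div_lt_iff_lt_mul hf0).mpr h⟩)
        else (⟨0, hf0⟩, ⟨0, hn⟩)) ?_ ?_ ?_ ?_ ?_
    · intro x _
      exact Finset.mem_range.mpr (hkey x.1 x.2).1
    · intro k _; exact Finset.mem_univ _
    · intro x _
      have hi := x.1.isLt
      have hlt := (hkey x.1 x.2).1
      rw [dif_pos hlt]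
      have h1 : ((x.1 : ℕ) + (x.2 : ℕ) * f) % f = x.1 := by
        rw [Nat.add_mul_mod_self_right, Nat.mod_eq_of_lt hi]
      have h2 : ((x.1 : ℕ) + (x.2 : ℕ) * f) / f = x.2 := by
        rw [Nat.add_mul_div_right _ _ hf0, Nat.div_eq_of_lt hi, zero_add]
      simp only [h1, h2, Fin.eta]
    · intro k hk
      rw [Finset.mem_range] at hk
      rw [dif_pos hk]
      exact Nat.mod_add_div' k f
    · intro x _
      rw [(hkey x.1 x.2).2]
  rw [hsum_eq] at hdvd
  -- bound the sum
  have hG : ((p : ℤ) - 1) * ∑ k ∈ Finset.range (n * f), (p : ℤ) ^ k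
      = (p : ℤ) ^ (n * f) - 1 := mul_geom_sum (p : ℤ) (n * f)
  have hGpos : 0 < ∑ k ∈ Finset.range (n * f), (p : ℤ) ^ k :=
    Finset.sum_pos (fun k _ => pow_pos (by omega) k)
      (Finset.nonempty_range_iff.mpr (Nat.mul_ne_zero (by omega) (by omega)))
  have habs : |∑ k ∈ Finset.range (n * f), g k * (p : ℤ) ^ k| < (p : ℤ) ^ (n * f) - 1 := by
    calc |∑ k ∈ Finset.range (n * f), g k * (p : ℤ) ^ k|
        ≤ ∑ k ∈ Finset.range (n * f), |g k * (p : ℤ) ^ k| := Finset.abs_sum_le_sum_abs _ _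
      _ ≤ ∑ k ∈ Finset.range (n * f), ((p : ℤ) - 2) * (p : ℤ) ^ k := by
          refine Finset.sum_le_sum fun k _ => ?_
          rw [abs_mul, abs_pow, abs_of_nonneg (by positivity : (0:ℤ) ≤ (p:ℤ))]
          exact mul_le_mul_of_nonneg_right (hg_b2 k) (by positivity)
      _ = ((p : ℤ) - 2) * ∑ k ∈ Finset.range (n * f), (p : ℤ) ^ k := by
          rw [Finset.mul_sum]
      _ < ((p : ℤ) - 1) * ∑ k ∈ Finset.range (n * f), (p : ℤ) ^ k := by
          apply mul_lt_mul_of_pos_right _ hGpos; linarith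
      _ = (p : ℤ) ^ (n * f) - 1 := hG
  have hS0 : ∑ k ∈ Finset.range (n * f), g k * (p : ℤ) ^ k = 0 :=
    Int.eq_zero_of_abs_lt_dvd hdvd habs
  have hz := digits_zero (p : ℤ) hp2 (n * f) g hg_bound hS0
  intro i j
  rw [← (hkey i j).2]
  exact hz _ (hkey i j).1
end

section
/- Let ω be a p-valuation on a group Γ with values in (1/(p−1), ∞). Then for ω(x) = s, ω(y) = t, the bracket [x Fil^{s+} Γ, y Fil^{t+} Γ] := (xyx^{-1}y^{-1}) Fil^{(s+t)+} Γ is well-defined on the associated graded abelian groups gr^s Γ = Fil^s Γ / Fil^{s+} Γ, where Fil^{s+} Γ := {z : ω(z) > s}. That is, if x ≡ x' mod Fil^{s+}Γ and y ≡ y' mod Fil^{t+}Γ then the commutators [x,y] and [x',y'] are congruent modulo Fil^{(s+t)+}Γ. -/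
open scoped ENNReal

/-- For a `p`-valuation `ω` on a group `Γ`, the graded Lie bracket on
`gr Γ` is well defined: if `ω x = s`, `ω y = t`, and `x ≡ x'` modulo `Fil^{s+} Γ`
(i.e. `ω (x⁻¹ x') > s`) and `y ≡ y'` modulo `Fil^{t+} Γ`, then the commutators
`[x,y] = xyx⁻¹y⁻¹` and `[x',y']` are congruent modulo `Fil^{(s+t)+} Γ`. -/
theorem graded_bracket_well_defined
    (p : ℕ) (hp : p.Prime) (Γ : Type*) [Group Γ] (ω : Γ → ℝ≥0∞)
    (hone : ω 1 = ⊤)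
    (hfin : ∀ x : Γ, x ≠ 1 → ω x ≠ ⊤)
    (hlow : ∀ x : Γ, x ≠ 1 → ((p : ℝ≥0∞) - 1)⁻¹ < ω x)
    (hdiv : ∀ x y : Γ, min (ω x) (ω y) ≤ ω (x * y⁻¹))
    (hcomm : ∀ x y : Γ, ω x + ω y ≤ ω (x * y * x⁻¹ * y⁻¹))
    (hpow : ∀ x : Γ, ω (x ^ p) = ω x + 1)
    (s t : ℝ≥0∞) (hs : s ≠ ⊤) (ht : t ≠ ⊤)
    (x x' y y' : Γ)
    (hx : ω x = s) (hy : ω y = t)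
    (hxx' : s < ω (x⁻¹ * x')) (hyy' : t < ω (y⁻¹ * y')) :
    s + t < ω ((x * y * x⁻¹ * y⁻¹)⁻¹ * (x' * y' * x'⁻¹ * y'⁻¹)) := by
  -- basic consequences of the axioms
  have winv : ∀ z : Γ, ω z ≤ ω z⁻¹ := by
    intro z
    have h := hdiv 1 z
    simpa [hone] using h
  have wmul : ∀ a b : Γ, min (ω a) (ω b) ≤ ω (a * b) := by
    intro a b
    calc min (ω a) (ω b) ≤ min (ω a) (ω b⁻¹) := min_le_min le_rfl (winv b)
    _ ≤ ω (a * b⁻¹⁻¹) := hdiv a b⁻¹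
    _ = ω (a * b) := by rw [inv_inv]
  have wconj : ∀ g z : Γ, ω z ≤ ω (g * z * g⁻¹) := by
    intro g z
    have h1 : ω z ≤ ω (g * z * g⁻¹ * z⁻¹) := le_trans le_add_self (hcomm g z)
    have h2 : min (ω (g * z * g⁻¹ * z⁻¹)) (ω z) ≤ ω ((g * z * g⁻¹ * z⁻¹) * z) :=
      wmul _ _
    have h3 : (g * z * g⁻¹ * z⁻¹) * z = g * z * g⁻¹ := by group
    rw [h3] at h2
    exact le_trans (le_min h1 le_rfl) h2
  set a := x⁻¹ * x' with ha
  set b := y⁻¹ * y' with hb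
  have hx' : s ≤ ω x' := by
    have : x' = x * a := by rw [ha]; group
    rw [this]
    refine le_trans ?_ (wmul x a)
    exact le_min hx.ge hxx'.le
  -- step 1 : change x to x'
  have step1 : s + t < ω ((x * y * x⁻¹ * y⁻¹)⁻¹ * (x' * y * x'⁻¹ * y⁻¹)) := by
    have hid : (x * y * x⁻¹ * y⁻¹)⁻¹ * (x' * y * x'⁻¹ * y⁻¹)
        = (y * x) * (y⁻¹ * a * y * a⁻¹) * (y * x)⁻¹ := by
      rw [ha]; group
    rw [hid]
    refine lt_of_lt_of_le ?_ (wconj (y * x) _)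
    have hc : ω y⁻¹ + ω a ≤ ω (y⁻¹ * a * y * a⁻¹) := by
      have := hcomm y⁻¹ a
      rwa [inv_inv] at this
    have : t + ω a ≤ ω (y⁻¹ * a * y * a⁻¹) :=
      le_trans (add_le_add_left (hy ▸ winv y) _) hc
    refine lt_of_lt_of_le ?_ this
    calc s + t = t + s := add_comm s t
    _ < t + ω a := ENNReal.add_lt_add_left ht hxx'
  -- step 2 : change y to y'
  have step2 : s + t < ω ((x' * y * x'⁻¹ * y⁻¹)⁻¹ * (x' * y' * x'⁻¹ * y'⁻¹)) := by
    have hid : (x' * y * x'⁻¹ * y⁻¹)⁻¹ * (x' * y' * x'⁻¹ * y'⁻¹)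
        = y * (x' * b * x'⁻¹ * b⁻¹) * y⁻¹ := by
      rw [hb]; group
    rw [hid]
    refine lt_of_lt_of_le ?_ (wconj y _)
    have hc : ω x' + ω b ≤ ω (x' * b * x'⁻¹ * b⁻¹) := hcomm x' b
    have : s + ω b ≤ ω (x' * b * x'⁻¹ * b⁻¹) :=
      le_trans (add_le_add_left hx' _) hc
    refine lt_of_lt_of_le ?_ this
    exact ENNReal.add_lt_add_left hs hyy'
  -- combine
  have hid : ((x * y * x⁻¹ * y⁻¹)⁻¹ * (x' * y * x'⁻¹ * y⁻¹))
      * ((x' * y * x'⁻¹ * y⁻¹)⁻¹ * (x' * y' * x'⁻¹ * y'⁻¹))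
      = (x * y * x⁻¹ * y⁻¹)⁻¹ * (x' * y' * x'⁻¹ * y'⁻¹) := by group
  have m := lt_min step1 step2
  have := lt_of_lt_of_le m (wmul ((x * y * x⁻¹ * y⁻¹)⁻¹ * (x' * y * x'⁻¹ * y⁻¹))
    ((x' * y * x'⁻¹ * y⁻¹)⁻¹ * (x' * y' * x'⁻¹ * y'⁻¹)))
  rwa [hid] at this
end
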